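/- Let (S, A, n, u) be an organizer. Then every internal transformation lies on some directed cycle of the system graph of A. -/

import Mathlib

open Finset

/-- The system graph of a subsystem `(A0, A1)`: edges `j → i` when `A0 i j > 0`
and `i → j` when `A1 i j > 0`. -/
def sysStep {T E : Type*} (A0 A1 : T → E → ℕ) : (E ⊕ T) → (E ⊕ T) → Prop
  | Sum.inl j, Sum.inr i => 0 < A0 i j
  | Sum.inr i, Sum.inl j => 0 < A1 i j
  | _, _ => False

/-- Circulation lemma: in a finite directed graph with a nonnegative integer
circulation `w` (flow conservation at every node), every vertex with positive
outflow lies on a directed cycle of the support graph. -/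
theorem circulation_cycle {V : Type*} [Fintype V] (w : V → V → ℕ)
    (hbal : ∀ v, ∑ y, w v y = ∑ x, w x v) (s : V) (hs : 0 < ∑ y, w s y) :
    Relation.TransGen (fun a b => 0 < w a b) s s := by
  classical
  set step : V → V → Prop := fun a b => 0 < w a b with hstep
  set R : Finset V := univ.filter (fun x => Relation.ReflTransGen step s x) with hR
  have hsR : s ∈ R := by
    simp only [hR, mem_filter, mem_univ, true_and]
    exact Relation.ReflTransGen.refl
  have hclos : ∀ x ∈ R, ∀ y, 0 < w x y → y ∈ R := by
    intro x hx y hxy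
    simp only [hR, mem_filter, mem_univ, true_and] at hx ⊢
    exact hx.tail hxy
  -- edges leaving R have weight 0
  have hout : ∀ x ∈ R, ∑ y ∈ Rᶜ, w x y = 0 := by
    intro x hx
    refine Finset.sum_eq_zero fun y hy => ?_
    by_contra h
    exact (mem_compl.mp hy) (hclos x hx y (Nat.pos_of_ne_zero h))
  -- total out of R = total in of R
  have hkey : ∑ x ∈ R, ∑ z ∈ Rᶜ, w z x = 0 := by
    have h1 : ∑ x ∈ R, ∑ y, w x y = ∑ x ∈ R, ∑ y ∈ R, w x y := by
      refine Finset.sum_congr rfl fun x hx => ?_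
      rw [← Finset.sum_add_sum_compl R (w x), hout x hx, add_zero]
    have h2 : ∑ x ∈ R, ∑ z, w z x
        = ∑ x ∈ R, ∑ z ∈ R, w z x + ∑ x ∈ R, ∑ z ∈ Rᶜ, w z x := by
      rw [← Finset.sum_add_distrib]
      refine Finset.sum_congr rfl fun x _ => ?_
      rw [Finset.sum_add_sum_compl]
    have h3 : ∑ x ∈ R, ∑ y, w x y = ∑ x ∈ R, ∑ z, w z x :=
      Finset.sum_congr rfl fun x _ => hbal x
    have h4 : ∑ x ∈ R, ∑ y ∈ R, w x y = ∑ x ∈ R, ∑ z ∈ R, w z x :=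
      Finset.sum_comm
    omega
  have hins : ∑ z ∈ Rᶜ, w z s = 0 := by
    have := Finset.sum_eq_zero_iff.mp hkey s hsR
    exact this
  -- inflow to s is positive, and comes from R
  have hin : 0 < ∑ z ∈ R, w z s := by
    have : 0 < ∑ z, w z s := by rw [← hbal]; exact hs
    rw [← Finset.sum_add_sum_compl R (fun z => w z s), hins, add_zero] at this
    exact this
  obtain ⟨z, hzR, hzpos⟩ : ∃ z ∈ R, 0 < w z s := by
    by_contra h
    push_neg at h
    have : ∑ z ∈ R, w z s = 0 :=
      Finset.sum_eq_zero fun z hz => Nat.le_zero.mp (h z hz)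
    omega
  have hsz : Relation.ReflTransGen step s z := by
    simpa [hR] using hzR
  exact Relation.TransGen.tail' hsz hzpos

/-- In an organizer, every internal transformation lies on a directed cycle of the system graph. -/
theorem stmt_4 {T E : Type*} [Fintype T] [Fintype E]
    (S0 S1 A0 A1 : T → E → ℕ)
    (hA0 : ∀ i j, A0 i j ≤ S0 i j) (hA1 : ∀ i j, A1 i j ≤ S1 i j)
    (hAne : ∃ i j, 0 < A0 i j ∨ 0 < A1 i j)
    (n : E → ℕ) (u : T → ℕ)
    (hnfull : ∀ j : E, (∃ i, 0 < A0 i j ∨ 0 < A1 i j) ↔ 0 < n j)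
    (hufull : ∀ i : T, (∃ j, 0 < A0 i j ∨ 0 < A1 i j) ↔ 0 < u i)
    (hcons : ∀ i : T, ∑ j, A0 i j * n j = ∑ j, A1 i j * n j)
    (hcyc : ∀ j : E, ∑ i, A0 i j * u i = ∑ i, A1 i j * u i) :
    ∀ i : T, (∃ j, 0 < A0 i j ∨ 0 < A1 i j) →
      Relation.TransGen (sysStep A0 A1) (Sum.inr i) (Sum.inr i) := by
  classical
  -- the weighted circulation on the bipartite system graph
  set w : (E ⊕ T) → (E ⊕ T) → ℕ := fun a b =>
    match a, b with
    | Sum.inl j, Sum.inr i => A0 i j * n j * u i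
    | Sum.inr i, Sum.inl j => A1 i j * n j * u i
    | _, _ => 0 with hw
  have hmono : ∀ a b, 0 < w a b → sysStep A0 A1 a b := by
    rintro (j|i) (j'|i') h <;> simp only [hw] at h
    · exact absurd h (lt_irrefl 0)
    · show 0 < A0 i' j
      rcases Nat.eq_zero_or_pos (A0 i' j) with hz | hp
      · simp [hz] at h
      · exact hp
    · show 0 < A1 i j'
      rcases Nat.eq_zero_or_pos (A1 i j') with hz | hp
      · simp [hz] at h
      · exact hp
    · exact absurd h (lt_irrefl 0)
  have hbal : ∀ v, ∑ y, w v y = ∑ x, w x v := by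
    rintro (j | i)
    · -- entity node j
      rw [Fintype.sum_sum_type, Fintype.sum_sum_type]
      simp only [hw]
      have h1 : ∀ f : E → ℕ, (∀ j', f j' = 0) → ∑ j', f j' = 0 := by
        intro f hf; simp [hf]
      simp only [Finset.sum_const_zero, zero_add, add_zero]
      calc ∑ i, A0 i j * n j * u i = n j * ∑ i, A0 i j * u i := by
            rw [Finset.mul_sum]; exact Finset.sum_congr rfl fun i _ => by ring
        _ = n j * ∑ i, A1 i j * u i := by rw [hcyc j]
        _ = ∑ i, A1 i j * n j * u i := by
            rw [Finset.mul_sum]; exact Finset.sum_congr rfl fun i _ => by ring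
    · -- transformation node i
      rw [Fintype.sum_sum_type, Fintype.sum_sum_type]
      simp only [hw]
      simp only [Finset.sum_const_zero, zero_add, add_zero]
      calc ∑ j, A1 i j * n j * u i = (∑ j, A1 i j * n j) * u i := by
            rw [Finset.sum_mul]
        _ = (∑ j, A0 i j * n j) * u i := by rw [hcons i]
        _ = ∑ j, A0 i j * n j * u i := by rw [Finset.sum_mul]
  intro i hi
  have hui : 0 < u i := (hufull i).mp hi
  have hpos : 0 < ∑ y, w (Sum.inr i) y := by
    obtain ⟨j, hj⟩ := hi
    have hnj : 0 < n j := (hnfull j).mp ⟨i, hj⟩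
    rcases hj with h0 | h1
    · -- inflow positive, use balance
      rw [hbal]
      have : 0 < w (Sum.inl j) (Sum.inr i) := by
        simp only [hw]; positivity
      calc 0 < w (Sum.inl j) (Sum.inr i) := this
        _ ≤ ∑ x, w x (Sum.inr i) :=
          Finset.single_le_sum (f := fun x => w x (Sum.inr i))
            (fun x _ => Nat.zero_le _) (Finset.mem_univ (Sum.inl j : E ⊕ T))
    · have : 0 < w (Sum.inr i) (Sum.inl j) := by
        simp only [hw]; positivity
      calc 0 < w (Sum.inr i) (Sum.inl j) := this
        _ ≤ ∑ y, w (Sum.inr i) y :=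
          Finset.single_le_sum (fun x _ => Nat.zero_le _) (Finset.mem_univ (Sum.inl j : E ⊕ T))
  exact Relation.TransGen.mono hmono _ _ (circulation_cycle w hbal (Sum.inr i) hpos)
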